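/- Let Z₁, Z₂ ∈ ℝ^{n×n} be symmetric matrices such that for every nonzero x ∈ ℝⁿ, min(xᵀZ₁x, xᵀZ₂x) < 0. Then there exist constants τ₁, τ₂ ≥ 0 such that τ₁Z₁ + τ₂Z₂ is negative definite. -/

import Mathlib

open Matrix

open Matrix Metric ContinuousLinearMap
open scoped RealInnerProductSpace

section Key
variable {E : Type*} [NormedAddCommGroup E] [InnerProductSpace ℝ E] [FiniteDimensional ℝ E]

lemma quad_smul (T : E →L[ℝ] E) (c : ℝ) (x : E) :
    ⟪T (c • x), c • x⟫ = c ^ 2 * ⟪T x, x⟫ := by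
  rw [ContinuousLinearMap.map_smul, real_inner_smul_left, real_inner_smul_right]; ring

lemma combo_neg {t a b : ℝ} (ht0 : 0 ≤ t) (ht1 : t ≤ 1) (ha : a < 0) (hb : b < 0) :
    (1 - t) * a + t * b < 0 := by
  rcases eq_or_lt_of_le ht0 with rfl | ht0'
  · simpa using ha
  · have h1 : t * b < 0 := mul_neg_of_pos_of_neg ht0' hb
    have h2 : (1 - t) * a ≤ 0 := mul_nonpos_of_nonneg_of_nonpos (by linarith) ha.le
    linarith

lemma key (T₁ T₂ : E →L[ℝ] E) (h₁ : _root_.IsSelfAdjoint T₁) (h₂ : _root_.IsSelfAdjoint T₂)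
    (h : ∀ x : E, x ≠ 0 → min ⟪T₁ x, x⟫ ⟪T₂ x, x⟫ < 0) :
    ∃ t ∈ Set.Icc (0:ℝ) 1, ∀ x : E, x ≠ 0 → (1 - t) * ⟪T₁ x, x⟫ + t * ⟪T₂ x, x⟫ < 0 := by
  classical
  by_cases hne : ∃ x : E, x ≠ 0
  swap
  · push_neg at hne
    exact ⟨0, by simp, fun x hx => absurd (hne x) hx⟩
  obtain ⟨x₀, hx₀⟩ := hne
  set Q : ℝ → E → ℝ := fun t x => (1 - t) * ⟪T₁ x, x⟫ + t * ⟪T₂ x, x⟫ with hQ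
  have hq1cont : Continuous fun x : E => ⟪T₁ x, x⟫ := (T₁.continuous.inner continuous_id)
  have hq2cont : Continuous fun x : E => ⟪T₂ x, x⟫ := (T₂.continuous.inner continuous_id)
  have hQcont : Continuous fun p : ℝ × E => Q p.1 p.2 := by
    apply Continuous.add
    · exact (continuous_const.sub continuous_fst).mul (hq1cont.comp continuous_snd)
    · exact continuous_fst.mul (hq2cont.comp continuous_snd)
  set S : Set E := sphere (0:E) 1 with hS
  have hScpt : IsCompact S := isCompact_sphere 0 1
  have hSne : S.Nonempty := ⟨‖x₀‖⁻¹ • x₀, by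
    simp [hS, norm_smul, inv_mul_cancel₀ (norm_ne_zero_iff.2 hx₀)]⟩
  have hSx : ∀ x ∈ S, x ≠ 0 := fun x hx => by
    intro h0; rw [hS, mem_sphere_zero_iff_norm] at hx; simp [h0] at hx
  by_cases hgood : ∃ t ∈ Set.Icc (0:ℝ) 1, ∀ x ∈ S, Q t x < 0
  · obtain ⟨t, ht, hQt⟩ := hgood
    refine ⟨t, ht, fun x hx => ?_⟩
    have hn : ‖x‖ ≠ 0 := norm_ne_zero_iff.2 hx
    have hmem : ‖x‖⁻¹ • x ∈ S := by
      simp [hS, norm_smul, inv_mul_cancel₀ hn, abs_of_nonneg (inv_nonneg.2 (norm_nonneg x))]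
    have hlt := hQt _ hmem
    have hexp : Q t (‖x‖⁻¹ • x) = (‖x‖⁻¹) ^ 2 * Q t x := by
      simp only [hQ, quad_smul]; ring
    rw [hexp] at hlt
    have hpos : 0 < (‖x‖⁻¹) ^ 2 :=
      pow_pos (inv_pos.2 (lt_of_le_of_ne (norm_nonneg x) (Ne.symm hn))) 2
    nlinarith
  · push_neg at hgood
    exfalso
    set K : Set (ℝ × E) := {p | p.1 ∈ Set.Icc (0:ℝ) 1 ∧ p.2 ∈ S ∧ ∀ y ∈ S, Q p.1 y ≤ Q p.1 p.2}
      with hK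
    have hKclosed : IsClosed K := by
      apply IsClosed.inter (isClosed_Icc.preimage continuous_fst)
      apply IsClosed.inter ((Metric.isClosed_sphere).preimage continuous_snd)
      have hset : {p : ℝ × E | ∀ y ∈ S, Q p.1 y ≤ Q p.1 p.2}
          = ⋂ y ∈ S, {p : ℝ × E | Q p.1 y ≤ Q p.1 p.2} := by
        ext p; simp
      show IsClosed {p : ℝ × E | ∀ y ∈ S, Q p.1 y ≤ Q p.1 p.2}
      rw [hset]
      refine isClosed_biInter fun y _ => ?_
      exact isClosed_le (hQcont.comp (continuous_fst.prodMk continuous_const)) hQcont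
    have hKcpt : IsCompact K := by
      refine IsCompact.of_isClosed_subset ((isCompact_Icc (a := (0:ℝ)) (b := 1)).prod hScpt) hKclosed ?_
      rintro ⟨t, x⟩ ⟨h1, h2, _⟩; exact ⟨h1, h2⟩
    set I₁ : Set ℝ := Prod.fst '' (K ∩ {p | 0 ≤ ⟪T₁ p.2, p.2⟫}) with hI₁
    set I₂ : Set ℝ := Prod.fst '' (K ∩ {p | 0 ≤ ⟪T₂ p.2, p.2⟫}) with hI₂
    have hc1 : IsClosed {p : ℝ × E | 0 ≤ ⟪T₁ p.2, p.2⟫} :=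
      isClosed_le continuous_const (hq1cont.comp continuous_snd)
    have hc2 : IsClosed {p : ℝ × E | 0 ≤ ⟪T₂ p.2, p.2⟫} :=
      isClosed_le continuous_const (hq2cont.comp continuous_snd)
    have hI₁closed : IsClosed I₁ := ((hKcpt.inter_right hc1).image continuous_fst).isClosed
    have hI₂closed : IsClosed I₂ := ((hKcpt.inter_right hc2).image continuous_fst).isClosed
    have hmax : ∀ t ∈ Set.Icc (0:ℝ) 1, ∃ x ∈ S, (∀ y ∈ S, Q t y ≤ Q t x) ∧ 0 ≤ Q t x := by
      intro t ht
      obtain ⟨x, hxS, hxmax⟩ := hScpt.exists_isMaxOn hSne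
        ((hQcont.comp (continuous_const.prodMk continuous_id)).continuousOn)
      obtain ⟨y, hyS, hy⟩ := hgood t ht
      exact ⟨x, hxS, fun z hz => hxmax hz, le_trans hy (hxmax hyS)⟩
    have hwit : ∀ (T : E →L[ℝ] E) (s : ℝ), s ∈ Prod.fst '' (K ∩ {p | 0 ≤ ⟪T p.2, p.2⟫}) →
        ∃ x ∈ S, (∀ y ∈ S, Q s y ≤ Q s x) ∧ 0 ≤ ⟪T x, x⟫ := by
      rintro T s ⟨⟨s', x⟩, ⟨⟨_, hxS, hmax'⟩, hq⟩, rfl⟩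
      exact ⟨x, hxS, hmax', hq⟩
    have hcover : Set.Icc (0:ℝ) 1 ⊆ I₁ ∪ I₂ := by
      intro t ht
      obtain ⟨x, hxS, hxmax, hxQ⟩ := hmax t ht
      have hxK : (t, x) ∈ K := ⟨ht, hxS, fun y hy => hxmax y hy⟩
      by_cases h1 : 0 ≤ ⟪T₁ x, x⟫
      · exact Or.inl ⟨(t, x), ⟨hxK, h1⟩, rfl⟩
      · by_cases h2 : 0 ≤ ⟪T₂ x, x⟫
        · exact Or.inr ⟨(t, x), ⟨hxK, h2⟩, rfl⟩
        · push_neg at h1 h2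
          exact absurd hxQ (not_le.2 (combo_neg ht.1 ht.2 h1 h2))
    have h0I₁ : (Set.Icc (0:ℝ) 1 ∩ I₁).Nonempty := by
      obtain ⟨x, hxS, hxmax, hxQ⟩ := hmax 0 (by norm_num)
      refine ⟨0, by norm_num, ⟨(0, x), ⟨⟨by norm_num, hxS, fun y hy => hxmax y hy⟩, ?_⟩, rfl⟩⟩
      simpa [hQ] using hxQ
    have h1I₂ : (Set.Icc (0:ℝ) 1 ∩ I₂).Nonempty := by
      obtain ⟨x, hxS, hxmax, hxQ⟩ := hmax 1 (by norm_num)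
      refine ⟨1, by norm_num, ⟨(1, x), ⟨⟨by norm_num, hxS, fun y hy => hxmax y hy⟩, ?_⟩, rfl⟩⟩
      simpa [hQ] using hxQ
    obtain ⟨t, htIcc, ht1, ht2⟩ :
        (Set.Icc (0:ℝ) 1 ∩ (I₁ ∩ I₂)).Nonempty :=
      (isPreconnected_closed_iff.mp isPreconnected_Icc) I₁ I₂ hI₁closed hI₂closed
        hcover h0I₁ h1I₂
    obtain ⟨x₁, hx₁S, hx₁max, hx₁q1⟩ := hwit T₁ t ht1
    obtain ⟨x₂, hx₂S, hx₂max, hx₂q2⟩ := hwit T₂ t ht2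
    have hx₁ne : x₁ ≠ 0 := hSx _ hx₁S
    have hx₂ne : x₂ ≠ 0 := hSx _ hx₂S
    have hq2x₁ : ⟪T₂ x₁, x₁⟫ < 0 := by
      rcases min_lt_iff.mp (h x₁ hx₁ne) with h' | h'
      · linarith
      · exact h'
    have hq1x₂ : ⟪T₁ x₂, x₂⟫ < 0 := by
      rcases min_lt_iff.mp (h x₂ hx₂ne) with h' | h'
      · exact h'
      · linarith
    have hQeq : Q t x₂ = Q t x₁ := le_antisymm (hx₁max _ hx₂S) (hx₂max _ hx₁S)
    obtain ⟨x', hx'S, hx'max, hx'Q⟩ := hmax t htIcc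
    have hμ : 0 ≤ Q t x₁ := le_trans hx'Q (hx₁max _ hx'S)
    set Tt : E →L[ℝ] E := (1 - t) • T₁ + t • T₂ with hTt
    have hTtsa : _root_.IsSelfAdjoint Tt := by
      rw [ContinuousLinearMap.isSelfAdjoint_iff_isSymmetric] at h₁ h₂ ⊢
      intro x y
      simp only [hTt, ContinuousLinearMap.coe_coe, ContinuousLinearMap.add_apply,
        ContinuousLinearMap.smul_apply, inner_add_left, inner_add_right,
        real_inner_smul_left, real_inner_smul_right]
      rw [show inner ℝ (T₁ x) y = inner ℝ x (T₁ y) from h₁ x y,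
        show inner ℝ (T₂ x) y = inner ℝ x (T₂ y) from h₂ x y]
    have hre : ∀ y : E, Tt.reApplyInnerSelf y = Q t y := by
      intro y
      simp [ContinuousLinearMap.reApplyInnerSelf, hTt, hQ, inner_add_left,
        real_inner_smul_left]
    have hnorm1 : ∀ x ∈ S, ‖x‖ = 1 := fun x hx => by rwa [hS, mem_sphere_zero_iff_norm] at hx
    have heig : ∀ x ∈ S, (∀ y ∈ S, Q t y ≤ Q t x) → Tt x = Q t x • x := by
      intro x hxS hmaxx
      have hmaxon : IsMaxOn Tt.reApplyInnerSelf (sphere (0:E) ‖x‖) x := by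
        intro y hy
        rw [hnorm1 x hxS] at hy
        simp only [Set.mem_setOf_eq, hre]
        exact hmaxx y hy
      have := hTtsa.eq_smul_self_of_isLocalExtrOn_real (Or.inr hmaxon.localize)
      rwa [ContinuousLinearMap.rayleighQuotient, hre, hnorm1 x hxS, one_pow, div_one] at this
    have heig₁ : Tt x₁ = Q t x₁ • x₁ := heig x₁ hx₁S (fun y hy => hx₁max y hy)
    have heig₂ : Tt x₂ = Q t x₁ • x₂ := by
      have := heig x₂ hx₂S (fun y hy => le_trans (hx₁max y hy) (hx₂max _ hx₁S))
      rwa [hQeq] at this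
    set z : ℝ → E := fun θ => Real.cos θ • x₁ + Real.sin θ • x₂ with hz
    have hzcont : Continuous z :=
      (Real.continuous_cos.smul continuous_const).add
        (Real.continuous_sin.smul continuous_const)
    have hzne : ∀ θ, z θ ≠ 0 := by
      intro θ h0
      by_cases hc : Real.cos θ = 0
      · have hs : Real.sin θ ≠ 0 := by
          intro hs; have := Real.sin_sq_add_cos_sq θ; rw [hs, hc] at this; norm_num at this
        rw [hz] at h0; simp only [hc, zero_smul, zero_add] at h0
        exact hx₂ne (by simpa [smul_eq_zero, hs] using h0)
      · have hx1eq : x₁ = (-(Real.sin θ) / Real.cos θ) • x₂ := by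
          have hcx : Real.cos θ • x₁ = -(Real.sin θ) • x₂ := by
            rw [hz] at h0
            rw [neg_smul, eq_neg_iff_add_eq_zero]; exact h0
          calc x₁ = (Real.cos θ)⁻¹ • (Real.cos θ • x₁) := by
                  rw [smul_smul, inv_mul_cancel₀ hc, one_smul]
            _ = (-(Real.sin θ) / Real.cos θ) • x₂ := by
                  rw [hcx, smul_smul]; ring_nf
        set c : ℝ := -(Real.sin θ) / Real.cos θ with hcdef
        have hcne : c ≠ 0 := by
          intro hc0; rw [hc0, zero_smul] at hx1eq; exact hx₁ne hx1eq
        have hq : ⟪T₁ x₁, x₁⟫ = c ^ 2 * ⟪T₁ x₂, x₂⟫ := by rw [hx1eq, quad_smul]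
        nlinarith [pow_pos (abs_pos.2 hcne) 2, sq_abs c]
    have hTtz : ∀ θ, Tt (z θ) = Q t x₁ • z θ := by
      intro θ
      rw [hz]
      simp only [map_add, ContinuousLinearMap.map_smul, heig₁, heig₂, smul_add, smul_smul,
        mul_comm]
    have hQz : ∀ θ, 0 ≤ Q t (z θ) := by
      intro θ
      have hinner : Q t (z θ) = ⟪Tt (z θ), z θ⟫ := by
        simp [hTt, hQ, inner_add_left, real_inner_smul_left]
      rw [hinner, hTtz θ, real_inner_smul_left, real_inner_self_eq_norm_sq]
      positivity
    set U : Set ℝ := {θ | ⟪T₁ (z θ), z θ⟫ < 0} with hU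
    set V : Set ℝ := {θ | ⟪T₂ (z θ), z θ⟫ < 0} with hV
    have hUopen : IsOpen U := isOpen_lt (hq1cont.comp hzcont) continuous_const
    have hVopen : IsOpen V := isOpen_lt (hq2cont.comp hzcont) continuous_const
    have hcover' : (Set.univ : Set ℝ) ⊆ U ∪ V := by
      intro θ _
      exact (min_lt_iff.mp (h (z θ) (hzne θ))).imp (fun h' => h') (fun h' => h')
    have hUne : (Set.univ ∩ U).Nonempty := by
      refine ⟨Real.pi / 2, Set.mem_univ _, ?_⟩
      have hzv : z (Real.pi / 2) = x₂ := by
        simp [hz, Real.cos_pi_div_two, Real.sin_pi_div_two]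
      simp only [hU, Set.mem_setOf_eq, hzv]
      exact hq1x₂
    have hVne : (Set.univ ∩ V).Nonempty := by
      refine ⟨0, Set.mem_univ _, ?_⟩
      have hzv : z 0 = x₁ := by simp [hz]
      simp only [hV, Set.mem_setOf_eq, hzv]
      exact hq2x₁
    obtain ⟨θ, -, hθU, hθV⟩ := isPreconnected_univ U V hUopen hVopen hcover' hUne hVne
    exact absurd (hQz θ) (not_le.2 (combo_neg htIcc.1 htIcc.2 hθU hθV))
end Key

open Matrix Metric
open scoped RealInnerProductSpace

variable {n : ℕ}

lemma bridge (Z : Matrix (Fin n) (Fin n) ℝ) (x : EuclideanSpace ℝ (Fin n)) :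
    ⟪(Matrix.toEuclideanCLM (𝕜 := ℝ) Z) x, x⟫
      = (WithLp.equiv 2 _ x) ⬝ᵥ (Z *ᵥ (WithLp.equiv 2 _ x)) := by
  rw [real_inner_comm, PiLp.inner_apply]
  simp only [RCLike.inner_apply, conj_trivial]
  simp only [dotProduct]; exact Finset.sum_congr rfl fun i _ => mul_comm _ _

lemma sa (Z : Matrix (Fin n) (Fin n) ℝ) (hZ : Z.IsSymm) :
    _root_.IsSelfAdjoint (Matrix.toEuclideanCLM (𝕜 := ℝ) Z) := by
  have : _root_.IsSelfAdjoint Z := by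
    rw [_root_.IsSelfAdjoint, Matrix.star_eq_conjTranspose,
      Matrix.conjTranspose_eq_transpose_of_trivial]
    exact hZ
  exact this.map (Matrix.toEuclideanCLM (𝕜 := ℝ))

/-- S-procedure: If symmetric Z₁, Z₂ satisfy
min(xᵀZ₁x, xᵀZ₂x) < 0 for every nonzero x, then some nonnegative combination
τ₁Z₁ + τ₂Z₂ is negative definite. -/
theorem stmt5 (n : ℕ) (Z₁ Z₂ : Matrix (Fin n) (Fin n) ℝ)
    (hZ₁ : Z₁.IsSymm) (hZ₂ : Z₂.IsSymm)
    (h : ∀ x : Fin n → ℝ, x ≠ 0 → min (x ⬝ᵥ (Z₁ *ᵥ x)) (x ⬝ᵥ (Z₂ *ᵥ x)) < 0) :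
    ∃ τ₁ τ₂ : ℝ, 0 ≤ τ₁ ∧ 0 ≤ τ₂ ∧
      ∀ x : Fin n → ℝ, x ≠ 0 → x ⬝ᵥ ((τ₁ • Z₁ + τ₂ • Z₂) *ᵥ x) < 0 := by
  have hmin : ∀ x : EuclideanSpace ℝ (Fin n), x ≠ 0 →
      min ⟪(Matrix.toEuclideanCLM (𝕜 := ℝ) Z₁) x, x⟫ ⟪(Matrix.toEuclideanCLM (𝕜 := ℝ) Z₂) x, x⟫ < 0 := by
    intro x hx
    rw [bridge Z₁ x, bridge Z₂ x]
    apply h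
    intro h0
    apply hx
    have : x = (WithLp.equiv 2 (Fin n → ℝ)).symm (WithLp.equiv 2 (Fin n → ℝ) x) := by simp
    rw [this, h0]
    simp
  obtain ⟨t, ht, hlt⟩ := key (Matrix.toEuclideanCLM (𝕜 := ℝ) Z₁)
      (Matrix.toEuclideanCLM (𝕜 := ℝ) Z₂) (sa Z₁ hZ₁) (sa Z₂ hZ₂) hmin
  refine ⟨1 - t, t, by linarith [ht.2], ht.1, fun x hx => ?_⟩
  set y : EuclideanSpace ℝ (Fin n) := (WithLp.equiv 2 _).symm x with hy
  have hyne : y ≠ 0 := by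
    intro h0
    apply hx
    have := congrArg (WithLp.equiv 2 (Fin n → ℝ)) h0
    simpa [hy] using this
  have hQ := hlt y hyne
  rw [bridge Z₁ y, bridge Z₂ y] at hQ
  have hxy : WithLp.equiv 2 (Fin n → ℝ) y = x := by simp [hy]
  rw [hxy] at hQ
  calc x ⬝ᵥ ((1 - t) • Z₁ + t • Z₂) *ᵥ x
      = (1 - t) * (x ⬝ᵥ Z₁ *ᵥ x) + t * (x ⬝ᵥ Z₂ *ᵥ x) := by
        rw [Matrix.add_mulVec, dotProduct_add, Matrix.smul_mulVec,
          Matrix.smul_mulVec, dotProduct_smul, dotProduct_smul, smul_eq_mul, smul_eq_mul]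
    _ < 0 := hQ
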